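/- The RKG2 method converges with order 2 on the linear model equation: for every integer s ≥ 2 and every complex number λ, there exists a constant C > 0 such that for every positive integer n, |R_s(λ/n)^n − exp(λ)| ≤ C/n^2. -/

import Mathlib

/-- The Gegenbauer polynomials with parameter 3/2, evaluated at complex arguments:
`C_0(x) = 1`, `C_1(x) = 3x`, and
`C_j(x) = ((2j+1)/j)·x·C_{j-1}(x) − ((j+1)/j)·C_{j-2}(x)` for `j ≥ 2`. -/
noncomputable def gegenbauerC : ℕ → ℂ → ℂ
  | 0, _ => 1
  | 1, x => 3 * x
  | (j + 2), x =>
      (2 * ((j : ℂ) + 2) + 1) / ((j : ℂ) + 2) * x * gegenbauerC (j + 1) x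
        - (((j : ℂ) + 2) + 1) / ((j : ℂ) + 2) * gegenbauerC j x

/-- The RKG2 coefficient `b_j = 4(j−1)(j+4)/(3j(j+1)(j+2)(j+3))`. -/
noncomputable def rkg2B (j : ℕ) : ℝ :=
  4 * ((j : ℝ) - 1) * ((j : ℝ) + 4) /
    (3 * (j : ℝ) * ((j : ℝ) + 1) * ((j : ℝ) + 2) * ((j : ℝ) + 3))

/-- The RKG2 coefficient `a_j = 1 − ((j+1)(j+2)/2)·b_j`. -/
noncomputable def rkg2A (j : ℕ) : ℝ :=
  1 - ((j : ℝ) + 1) * ((j : ℝ) + 2) / 2 * rkg2B j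

/-- The RKG2 parameter `w_1 = 6/((s+4)(s−1))`. -/
noncomputable def rkg2W (s : ℕ) : ℝ := 6 / (((s : ℝ) + 4) * ((s : ℝ) - 1))

/-- The RKG2 stability polynomial `R_j(z) = a_j + b_j·C_j(1 + w_1·z)`, evaluated at complex
arguments, where `w_1` is built from the stage number `s`. -/
noncomputable def rkg2RC (s j : ℕ) (z : ℂ) : ℂ :=
  (rkg2A j : ℂ) + (rkg2B j : ℂ) * gegenbauerC j (1 + (rkg2W s : ℂ) * z)


open Polynomial Finset


noncomputable def gpoly (w : ℂ) : ℕ → Polynomial ℂ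
  | 0 => 1
  | 1 => Polynomial.C 3 * (1 + Polynomial.C w * Polynomial.X)
  | (j + 2) =>
      Polynomial.C ((2 * ((j : ℂ) + 2) + 1) / ((j : ℂ) + 2)) * (1 + Polynomial.C w * Polynomial.X)
          * gpoly w (j + 1)
        - Polynomial.C ((((j : ℂ) + 2) + 1) / ((j : ℂ) + 2)) * gpoly w j

lemma nat2ind {P : ℕ → Prop} (h0 : P 0) (h1 : P 1)
    (hstep : ∀ j, P j → P (j + 1) → P (j + 2)) : ∀ j, P j := by
  intro j
  induction j using Nat.strong_induction_on with
  | _ j ih =>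
    match j with
    | 0 => exact h0
    | 1 => exact h1
    | (k + 2) => exact hstep k (ih k (by omega)) (ih (k + 1) (by omega))

lemma one_add_mul_coeff (w : ℂ) (P : Polynomial ℂ) :
    ((1 + Polynomial.C w * Polynomial.X) * P).coeff 0 = P.coeff 0 ∧
    ((1 + Polynomial.C w * Polynomial.X) * P).coeff 1 = P.coeff 1 + w * P.coeff 0 ∧
    ((1 + Polynomial.C w * Polynomial.X) * P).coeff 2 = P.coeff 2 + w * P.coeff 1 := by
  have h : (1 + Polynomial.C w * Polynomial.X) * P = P + Polynomial.C w * (Polynomial.X * P) := by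
    ring
  refine ⟨?_, ?_, ?_⟩ <;> simp [h, coeff_C_mul, coeff_X_mul, mul_coeff_zero]

lemma gpoly_coeff (w : ℂ) : ∀ j : ℕ,
    (gpoly w j).coeff 0 = ((j : ℂ) + 1) * ((j : ℂ) + 2) / 2 ∧
    (gpoly w j).coeff 1 = w * ((j : ℂ) * ((j : ℂ) + 1) * ((j : ℂ) + 2) * ((j : ℂ) + 3)) / 8 ∧
    (gpoly w j).coeff 2 = w ^ 2 * (((j : ℂ) - 1) * (j : ℂ) * ((j : ℂ) + 1) * ((j : ℂ) + 2)
      * ((j : ℂ) + 3) * ((j : ℂ) + 4)) / 96 := by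
  refine nat2ind ?_ ?_ ?_
  · refine ⟨?_, ?_, ?_⟩ <;> simp [gpoly, coeff_one] <;> norm_num
  · refine ⟨?_, ?_, ?_⟩ <;>
      simp [gpoly, mul_add, coeff_add, coeff_C_mul, coeff_one, coeff_X, coeff_C] <;> norm_num <;> ring
  · intro j ih1 ih2
    obtain ⟨a0, a1, a2⟩ := ih1
    obtain ⟨b0, b1, b2⟩ := ih2
    have hj : ((j : ℂ) + 2) ≠ 0 := by
      intro h
      have h2 : (((j : ℕ) + 2 : ℕ) : ℂ) = 0 := by push_cast; linear_combination h
      exact (Nat.succ_ne_zero (j + 1)) (by exact_mod_cast h2)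
    have key := one_add_mul_coeff w (gpoly w (j + 1))
    obtain ⟨k0, k1, k2⟩ := key
    push_cast at a0 a1 a2 b0 b1 b2 ⊢
    refine ⟨?_, ?_, ?_⟩ <;>
      simp only [gpoly, coeff_sub, coeff_C_mul, mul_assoc, k0, k1, k2, a0, a1, a2, b0, b1, b2] <;>
      field_simp <;> ring

lemma gpoly_eval (w : ℂ) : ∀ j, ∀ z : ℂ, (gpoly w j).eval z = gegenbauerC j (1 + w * z) := by
  refine nat2ind ?_ ?_ ?_
  · intro z; simp [gpoly, gegenbauerC]
  · intro z; simp [gpoly, gegenbauerC]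
  · intro j ih1 ih2 z
    simp only [gpoly, gegenbauerC, eval_sub, eval_mul, eval_C, eval_add, eval_one, eval_X,
      ih1, ih2]


lemma rkg_idB (s : ℕ) (hs : 2 ≤ s) :
    rkg2B s * (rkg2W s * ((s : ℝ) * ((s : ℝ) + 1) * ((s : ℝ) + 2) * ((s : ℝ) + 3)) / 8) = 1 := by
  have hx : (2 : ℝ) ≤ (s : ℝ) := by exact_mod_cast hs
  have h1 : (s : ℝ) ≠ 0 := by linarith
  have h2 : (s : ℝ) + 1 ≠ 0 := by linarith
  have h3 : (s : ℝ) + 2 ≠ 0 := by linarith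
  have h4 : (s : ℝ) + 3 ≠ 0 := by linarith
  have h5 : (s : ℝ) + 4 ≠ 0 := by linarith
  have h6 : (s : ℝ) - 1 ≠ 0 := by intro h; nlinarith
  unfold rkg2B rkg2W
  field_simp
  ring

lemma rkg_idC (s : ℕ) (hs : 2 ≤ s) :
    rkg2B s * (rkg2W s ^ 2 * (((s : ℝ) - 1) * (s : ℝ) * ((s : ℝ) + 1) * ((s : ℝ) + 2)
      * ((s : ℝ) + 3) * ((s : ℝ) + 4)) / 96) = 1 / 2 := by
  have hx : (2 : ℝ) ≤ (s : ℝ) := by exact_mod_cast hs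
  have h1 : (s : ℝ) ≠ 0 := by linarith
  have h2 : (s : ℝ) + 1 ≠ 0 := by linarith
  have h3 : (s : ℝ) + 2 ≠ 0 := by linarith
  have h4 : (s : ℝ) + 3 ≠ 0 := by linarith
  have h5 : (s : ℝ) + 4 ≠ 0 := by linarith
  have h6 : (s : ℝ) - 1 ≠ 0 := by intro h; nlinarith
  unfold rkg2B rkg2W
  field_simp
  ring

lemma rkg2_structure (s : ℕ) (hs : 2 ≤ s) :
    ∃ Q : Polynomial ℂ, ∀ z : ℂ,
      rkg2RC s s z = 1 + z + z ^ 2 / 2 + z ^ 3 * Q.eval z := by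
  set w : ℂ := (rkg2W s : ℂ) with hw
  set Rp : Polynomial ℂ :=
    Polynomial.C (rkg2A s : ℂ) + Polynomial.C (rkg2B s : ℂ) * gpoly w s with hRp
  obtain ⟨c0, c1, c2⟩ := gpoly_coeff w s
  have e0 : Rp.coeff 0 = 1 := by
    have : rkg2A s + rkg2B s * (((s : ℝ) + 1) * ((s : ℝ) + 2) / 2) = 1 := by
      unfold rkg2A; ring
    have h := congrArg (Complex.ofReal) this
    push_cast at h
    simp only [hRp, coeff_add, coeff_C_mul, coeff_C, c0]
    norm_num
    linear_combination h
  have e1 : Rp.coeff 1 = 1 := by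
    have := rkg_idB s hs
    have h := congrArg (Complex.ofReal) this
    push_cast at h
    simp only [hRp, coeff_add, coeff_C_mul, coeff_C, c1]
    norm_num
    linear_combination h
  have e2 : Rp.coeff 2 = 1 / 2 := by
    have := rkg_idC s hs
    have h := congrArg (Complex.ofReal) this
    push_cast at h
    simp only [hRp, coeff_add, coeff_C_mul, coeff_C, c2]
    norm_num
    linear_combination h
  set P : Polynomial ℂ :=
    Rp - (1 + Polynomial.X + Polynomial.C (2⁻¹ : ℂ) * Polynomial.X ^ 2) with hP
  have hdvd : Polynomial.X ^ 3 ∣ P := by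
    rw [Polynomial.X_pow_dvd_iff]
    intro d hd
    interval_cases d <;>
      simp [hP, coeff_one, coeff_X, coeff_C, e0, e1, e2] <;> norm_num
  obtain ⟨Q, hQ⟩ := hdvd
  refine ⟨Q, fun z => ?_⟩
  have hev : rkg2RC s s z = Rp.eval z := by
    simp [rkg2RC, hRp, gpoly_eval, hw]
  have hPz := congrArg (Polynomial.eval z) hQ
  simp only [hP, Polynomial.eval_sub, Polynomial.eval_add, Polynomial.eval_one,
    Polynomial.eval_X, Polynomial.eval_mul, Polynomial.eval_C, Polynomial.eval_pow] at hPz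
  rw [hev]
  rw [sub_eq_iff_eq_add] at hPz
  rw [hPz]
  ring

lemma exp_taylor3 (z : ℂ) (hz : ‖z‖ ≤ 1) :
    ‖Complex.exp z - (1 + z + z ^ 2 / 2)‖ ≤ ‖z‖ ^ 3 := by
  have h := Complex.exp_bound (x := z) (by exact hz) (n := 3) (by norm_num)
  have hsum : ∑ m ∈ Finset.range 3, z ^ m / (m.factorial : ℂ) = 1 + z + z ^ 2 / 2 := by
    simp [Finset.sum_range_succ, Nat.factorial]
  rw [hsum] at h
  calc ‖Complex.exp z - (1 + z + z ^ 2 / 2)‖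
      ≤ ‖z‖ ^ 3 * ((Nat.succ 3 : ℝ) * ((Nat.factorial 3 : ℝ) * 3)⁻¹) := h
    _ ≤ ‖z‖ ^ 3 * 1 := by
        apply mul_le_mul_of_nonneg_left _ (by positivity)
        norm_num [Nat.factorial]
    _ = ‖z‖ ^ 3 := by rw [mul_one]

set_option maxHeartbeats 1600000 in

/-- The RKG2 method converges with order 2 on the linear model equation: for every integer
`s ≥ 2` and every complex number `λ`, there exists a constant `C > 0` such that for every
positive integer `n`, `|R_s(λ/n)^n − exp(λ)| ≤ C/n^2`. -/
theorem rkg2_second_order_convergence (s : ℕ) (hs : 2 ≤ s) (lam : ℂ) :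
    ∃ C : ℝ, 0 < C ∧ ∀ n : ℕ, 0 < n →
      ‖(rkg2RC s s (lam / n)) ^ n - Complex.exp lam‖ ≤ C / (n : ℝ) ^ 2 := by
  obtain ⟨Q, hQ⟩ := rkg2_structure s hs
  set L : ℝ := ‖lam‖ with hL
  have hL0 : 0 ≤ L := norm_nonneg _
  -- bound for Q on the closed ball of radius L
  obtain ⟨M0, hM0⟩ := (isCompact_closedBall (0 : ℂ) L).exists_bound_of_continuousOn
    (Q.continuous.continuousOn (s := Metric.closedBall 0 L))
  set M : ℝ := max M0 0 with hM
  have hM0' : 0 ≤ M := le_max_right _ _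
  have hMQ : ∀ z : ℂ, ‖z‖ ≤ L → ‖Q.eval z‖ ≤ M := by
    intro z hz
    have h := hM0 z (by simpa [Metric.mem_closedBall, dist_zero_right] using hz)
    exact h.trans (le_max_left _ _)
  set K : ℝ := M + 1 with hK
  have hK1 : 1 ≤ K := by simp [hK]; linarith
  have hK0 : 0 < K := by linarith
  -- pointwise consistency estimate
  have hcons : ∀ z : ℂ, ‖z‖ ≤ 1 → ‖z‖ ≤ L → ‖rkg2RC s s z - Complex.exp z‖ ≤ K * ‖z‖ ^ 3 := by
    intro z hz1 hzL
    have h1 : ‖z ^ 3 * Q.eval z‖ ≤ ‖z‖ ^ 3 * M := by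
      rw [norm_mul, norm_pow]
      exact mul_le_mul_of_nonneg_left (hMQ z hzL) (by positivity)
    have h2 := exp_taylor3 z hz1
    calc ‖rkg2RC s s z - Complex.exp z‖
        = ‖z ^ 3 * Q.eval z - (Complex.exp z - (1 + z + z ^ 2 / 2))‖ := by rw [hQ z]; ring_nf
      _ ≤ ‖z ^ 3 * Q.eval z‖ + ‖Complex.exp z - (1 + z + z ^ 2 / 2)‖ := norm_sub_le _ _
      _ ≤ ‖z‖ ^ 3 * M + ‖z‖ ^ 3 := add_le_add h1 h2
      _ = K * ‖z‖ ^ 3 := by rw [hK]; ring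
  -- constants
  set N : ℕ := ⌈L⌉₊ + 1 with hN
  set B1 : ℝ := max (1 + L + L ^ 2 / 2 + L ^ 3 * M) 1 with hB1def
  have hB1 : (1 : ℝ) ≤ B1 := le_max_right _ _
  have hB1pos : (0 : ℝ) < B1 := lt_of_lt_of_le one_pos hB1
  set B2 : ℝ := B1 ^ N + Real.exp L with hB2def
  have hB2pos : (0 : ℝ) < B2 := add_pos (pow_pos hB1pos N) (Real.exp_pos L)
  set B : ℝ := Real.exp (L + K * L ^ 3) with hBdef
  have hBpos : (0 : ℝ) < B := Real.exp_pos _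
  refine ⟨max (B * K * L ^ 3) (B2 * (N : ℝ) ^ 2) + 1, ?_, ?_⟩
  · have h1 : (0 : ℝ) ≤ B2 * (N : ℝ) ^ 2 := by positivity
    have := le_max_right (B * K * L ^ 3) (B2 * (N : ℝ) ^ 2)
    linarith
  intro n hn
  set C : ℝ := max (B * K * L ^ 3) (B2 * (N : ℝ) ^ 2) + 1 with hC
  have hn1 : (1 : ℝ) ≤ (n : ℝ) := by exact_mod_cast hn
  have hnpos : (0 : ℝ) < (n : ℝ) := by linarith
  set z : ℂ := lam / n with hz
  have hzn : ‖z‖ = L / n := by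
    rw [hz, norm_div, Complex.norm_natCast]
  have hzL : ‖z‖ ≤ L := by rw [hzn]; exact div_le_self hL0 hn1
  set a : ℂ := rkg2RC s s z with ha
  by_cases hcase : L ≤ (n : ℝ)
  · -- large n
    have hz1 : ‖z‖ ≤ 1 := by rw [hzn]; exact (div_le_one hnpos).2 hcase
    set b : ℂ := Complex.exp z with hb
    set v : ℝ := K * (L / n) ^ 3 with hv
    have hv0 : 0 ≤ v := by positivity
    have hdiff : ‖a - b‖ ≤ v := by
      have := hcons z hz1 hzL
      rwa [hzn] at this
    set m : ℝ := Real.exp (L / n + v) with hm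
    have hm1 : (1 : ℝ) ≤ m := by
      rw [hm, ← Real.exp_zero]
      apply Real.exp_le_exp.2; positivity
    have hbm : ‖b‖ ≤ m := by
      rw [hb, Complex.norm_exp]
      apply Real.exp_le_exp.2
      have h1 : z.re ≤ ‖z‖ := by exact Complex.re_le_norm z
      rw [hzn] at h1; linarith
    have ham : ‖a‖ ≤ m := by
      have h1 : ‖a‖ ≤ ‖b‖ + v := by
        have := norm_sub_norm_le a b
        linarith
      have h2 : Real.exp (L / n) + v ≤ m := by
        have e1 : (1 : ℝ) ≤ Real.exp (L / n) := by
          rw [← Real.exp_zero]; apply Real.exp_le_exp.2; positivity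
        have e2 : (1 : ℝ) + v ≤ Real.exp v := by linarith [Real.add_one_le_exp v]
        have e3 : Real.exp (L / n) + v ≤ Real.exp (L / n) * (1 + v) := by nlinarith
        have e4 : Real.exp (L / n) * (1 + v) ≤ Real.exp (L / n) * Real.exp v := by nlinarith
        rw [hm, Real.exp_add]; linarith
      have h3 : ‖b‖ ≤ Real.exp (L / n) := by
        rw [hb, Complex.norm_exp]
        apply Real.exp_le_exp.2
        have h1 : z.re ≤ ‖z‖ := by exact Complex.re_le_norm z
        rw [hzn] at h1; exact h1
      linarith
    have hmn : m ^ n ≤ B := by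
      rw [hm, ← Real.exp_nat_mul, hBdef]
      apply Real.exp_le_exp.2
      have e1 : (n : ℝ) * (L / n) = L := by field_simp
      have e2 : (n : ℝ) * v = K * L ^ 3 / (n : ℝ) ^ 2 := by
        rw [hv]; field_simp
      have e3 : K * L ^ 3 / (n : ℝ) ^ 2 ≤ K * L ^ 3 := by
        apply div_le_self (by positivity)
        nlinarith [hn1]
      calc (n : ℝ) * (L / n + v) = L + (n : ℝ) * v := by rw [mul_add, e1]
        _ = L + K * L ^ 3 / (n : ℝ) ^ 2 := by rw [e2]
        _ ≤ L + K * L ^ 3 := by linarith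
    have hbn : b ^ n = Complex.exp lam := by
      rw [hb, ← Complex.exp_nat_mul]
      congr 1
      rw [hz]
      rw [← mul_div_assoc]
      exact mul_div_cancel_left₀ lam (Nat.cast_ne_zero.2 hn.ne')
    have hgeom : a ^ n - b ^ n = (∑ i ∈ Finset.range n, a ^ i * b ^ (n - 1 - i)) * (a - b) :=
      (geom_sum₂_mul a b n).symm
    have hsumb : ‖∑ i ∈ Finset.range n, a ^ i * b ^ (n - 1 - i)‖ ≤ (n : ℝ) * m ^ n := by
      calc ‖∑ i ∈ Finset.range n, a ^ i * b ^ (n - 1 - i)‖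
          ≤ ∑ i ∈ Finset.range n, ‖a ^ i * b ^ (n - 1 - i)‖ := norm_sum_le _ _
        _ ≤ ∑ _i ∈ Finset.range n, m ^ n := by
            apply Finset.sum_le_sum
            intro i hi
            rw [norm_mul, norm_pow, norm_pow]
            have hi' : i ≤ n - 1 := by
              have := Finset.mem_range.1 hi; omega
            calc ‖a‖ ^ i * ‖b‖ ^ (n - 1 - i)
                ≤ m ^ i * m ^ (n - 1 - i) := by
                  apply mul_le_mul (pow_le_pow_left₀ (norm_nonneg _) ham i)
                    (pow_le_pow_left₀ (norm_nonneg _) hbm _) (by positivity) (by positivity)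
              _ = m ^ (n - 1) := by rw [← pow_add]; congr 1; omega
              _ ≤ m ^ n := pow_le_pow_right₀ hm1 (Nat.sub_le n 1)
        _ = (n : ℝ) * m ^ n := by
            rw [Finset.sum_const, Finset.card_range, nsmul_eq_mul]
    have hmain : ‖a ^ n - Complex.exp lam‖ ≤ B * K * L ^ 3 / (n : ℝ) ^ 2 := by
      rw [← hbn, hgeom, norm_mul]
      calc ‖∑ i ∈ Finset.range n, a ^ i * b ^ (n - 1 - i)‖ * ‖a - b‖
          ≤ ((n : ℝ) * m ^ n) * v := by
            apply mul_le_mul hsumb hdiff (norm_nonneg _) (by positivity)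
        _ ≤ ((n : ℝ) * B) * v := by
            apply mul_le_mul_of_nonneg_right _ hv0
            exact mul_le_mul_of_nonneg_left hmn (by positivity)
        _ = B * K * L ^ 3 / (n : ℝ) ^ 2 := by
            rw [hv]; field_simp
    refine hmain.trans ?_
    apply div_le_div_of_nonneg_right _ (by positivity)
    · have := le_max_left (B * K * L ^ 3) (B2 * (N : ℝ) ^ 2)
      rw [hC]; linarith
  · -- small n
    push_neg at hcase
    have hnN : n ≤ N := by
      have h1 : (L : ℝ) ≤ (⌈L⌉₊ : ℝ) := Nat.le_ceil L
      have : (n : ℝ) < (⌈L⌉₊ : ℝ) := lt_of_lt_of_le hcase h1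
      have : n < ⌈L⌉₊ := by exact_mod_cast this
      omega
    have haB1 : ‖a‖ ≤ B1 := by
      rw [ha, hQ z]
      have hz2 : ‖z‖ ^ 2 ≤ L ^ 2 := pow_le_pow_left₀ (norm_nonneg _) hzL 2
      have hz3 : ‖z‖ ^ 3 ≤ L ^ 3 := pow_le_pow_left₀ (norm_nonneg _) hzL 3
      have hq : ‖Q.eval z‖ ≤ M := hMQ z hzL
      calc ‖1 + z + z ^ 2 / 2 + z ^ 3 * Q.eval z‖
          ≤ ‖(1 : ℂ)‖ + ‖z‖ + ‖z ^ 2 / 2‖ + ‖z ^ 3 * Q.eval z‖ := by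
            refine (norm_add_le _ _).trans ?_
            have h1 := norm_add_le (1 + z) (z ^ 2 / 2)
            have h2 := norm_add_le (1 : ℂ) z
            linarith [norm_add_le ((1 : ℂ) + z) (z ^ 2 / 2)]
        _ ≤ 1 + L + L ^ 2 / 2 + L ^ 3 * M := by
            have k1 : ‖(1 : ℂ)‖ = 1 := norm_one
            have k2 : ‖z ^ 2 / 2‖ = ‖z‖ ^ 2 / 2 := by
              rw [norm_div, norm_pow]; norm_num
            have k3 : ‖z ^ 3 * Q.eval z‖ = ‖z‖ ^ 3 * ‖Q.eval z‖ := by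
              rw [norm_mul, norm_pow]
            have h3 : ‖z‖ ^ 3 * ‖Q.eval z‖ ≤ L ^ 3 * M := by
              apply mul_le_mul hz3 hq (norm_nonneg _) (by positivity)
            linarith
        _ ≤ B1 := le_max_left _ _
    have hsmall : ‖a ^ n - Complex.exp lam‖ ≤ B2 := by
      calc ‖a ^ n - Complex.exp lam‖ ≤ ‖a ^ n‖ + ‖Complex.exp lam‖ := norm_sub_le _ _
        _ ≤ B1 ^ n + Real.exp L := by
            apply add_le_add
            · rw [norm_pow]; exact pow_le_pow_left₀ (norm_nonneg _) haB1 n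
            · rw [Complex.norm_exp]
              apply Real.exp_le_exp.2
              rw [hL]; exact Complex.re_le_norm lam
        _ ≤ B1 ^ N + Real.exp L := by
            refine add_le_add ?_ le_rfl
            exact pow_le_pow_right₀ hB1 hnN
        _ = B2 := hB2def.symm
    refine hsmall.trans ?_
    rw [le_div_iff₀ (by positivity)]
    have h1 : B2 * (n : ℝ) ^ 2 ≤ B2 * (N : ℝ) ^ 2 := by
      apply mul_le_mul_of_nonneg_left _ (le_of_lt hB2pos)
      have : (n : ℝ) ≤ (N : ℝ) := by exact_mod_cast hnN
      nlinarith
    have h2 := le_max_right (B * K * L ^ 3) (B2 * (N : ℝ) ^ 2)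
    rw [hC]
    calc B2 * (n : ℝ) ^ 2 = B2 * (n : ℝ) ^ 2 := rfl
      _ ≤ B2 * (N : ℝ) ^ 2 := h1
      _ ≤ max (B * K * L ^ 3) (B2 * (N : ℝ) ^ 2) + 1 := by linarith
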